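/- arXiv:1708.05855 — 5 statements merged into one kernel-verified Lean document; each statement's English description precedes it below -/
import Mathlib

section
/- Let −π < θ_1 < θ_2 < ⋯ < θ_n ≤ π with n ≥ 3, θ_{n+1} := θ_1 + 2π, and let f : ℝ → ℝ be twice continuously differentiable on (0,∞) with f″(x) > 0 for all x > 0 and f(1) = 0. Then for every z in the open unit disk, the reduced f-divergence distance satisfies d_f(z) = 0 if and only if z = 0; equivalently, if φ_j(z) = (θ_{j+1} − θ_j)/(2π) for all j = 1,…,n, then z = 0. -/
/-- The Poisson kernel of the unit disk:
`P(z,θ) = (1/(2π)) · (1 − |z|²)/|z − e^{iθ}|²`. -/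
noncomputable def poisson (z : ℂ) (θ : ℝ) : ℝ :=
  (1 / (2 * Real.pi)) * (1 - ‖z‖ ^ 2) /
    ‖z - Complex.exp (θ * Complex.I)‖ ^ 2

lemma pv_lt_one {a b : ℝ} (h : a ^ 2 + b ^ 2 < 1) (t : ℝ) :
    a * Real.cos t + b * Real.sin t < 1 := by
  nlinarith [sq_nonneg (a * Real.sin t - b * Real.cos t), Real.sin_sq_add_cos_sq t,
    sq_nonneg (a * Real.cos t + b * Real.sin t - 1)]

lemma pv_denom_pos {a b : ℝ} (h : a ^ 2 + b ^ 2 < 1) (t : ℝ) :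
    0 < 1 + (a ^ 2 + b ^ 2) - 2 * (a * Real.cos t + b * Real.sin t) := by
  have h1 := pv_lt_one h t
  nlinarith [sq_nonneg (a * Real.sin t - b * Real.cos t), Real.sin_sq_add_cos_sq t,
    mul_pos (sub_pos.2 h1) (sub_pos.2 h1)]

/-- Global antiderivative of `2π · P(z,·)` where `z = a + b i`. -/
noncomputable def Gf (a b t : ℝ) : ℝ :=
  t + 2 * Real.arctan ((a * Real.sin t - b * Real.cos t) /
    (1 - (a * Real.cos t + b * Real.sin t)))

lemma Gf_hasDeriv {a b : ℝ} (h : a ^ 2 + b ^ 2 < 1) (t : ℝ) :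
    HasDerivAt (Gf a b)
      ((1 - (a ^ 2 + b ^ 2)) /
        (1 + (a ^ 2 + b ^ 2) - 2 * (a * Real.cos t + b * Real.sin t))) t := by
  have hpyth := Real.sin_sq_add_cos_sq t
  have hden : (1 : ℝ) - (a * Real.cos t + b * Real.sin t) ≠ 0 :=
    (sub_pos.2 (pv_lt_one h t)).ne'
  have hDpos := pv_denom_pos h t
  have hN : HasDerivAt (fun t => a * Real.sin t - b * Real.cos t)
      (a * Real.cos t + b * Real.sin t) t := by
    have := ((Real.hasDerivAt_sin t).const_mul a).sub ((Real.hasDerivAt_cos t).const_mul b)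
    exact this.congr_deriv (by ring)
  have hD : HasDerivAt (fun t => 1 - (a * Real.cos t + b * Real.sin t))
      (a * Real.sin t - b * Real.cos t) t := by
    have := (((Real.hasDerivAt_cos t).const_mul a).add
      ((Real.hasDerivAt_sin t).const_mul b)).const_sub 1
    exact this.congr_deriv (by ring)
  have hq := (hN.div hD hden).arctan
  have hG := (hasDerivAt_id t).add (hq.const_mul 2)
  set sN := a * Real.sin t - b * Real.cos t with hsN
  set sS := a * Real.cos t + b * Real.sin t with hsS
  have hNsq : sN ^ 2 = (a ^ 2 + b ^ 2) - sS ^ 2 := by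
    rw [hsN, hsS]; linear_combination (a ^ 2 + b ^ 2) * hpyth
  refine hG.congr_deriv ?_
  symm
  simp only [Pi.div_apply, ← hsN, ← hsS]
  have key : 1 + (sN / (1 - sS)) ^ 2
      = (1 + (a ^ 2 + b ^ 2) - 2 * sS) / (1 - sS) ^ 2 := by
    field_simp
    linear_combination hNsq
  rw [key, one_div_div, div_mul_div_comm,
    mul_comm ((1 - sS) ^ 2) (sS * (1 - sS) - sN * sN),
    mul_div_mul_right _ _ (pow_ne_zero 2 hden)]
  have h2 : sS * (1 - sS) - sN * sN = sS - (a ^ 2 + b ^ 2) := by linear_combination -hNsq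
  rw [h2,
    show (1:ℝ) + 2 * ((sS - (a ^ 2 + b ^ 2)) / (1 + (a ^ 2 + b ^ 2) - 2 * sS)) =
      ((1 + (a ^ 2 + b ^ 2) - 2 * sS) + 2 * (sS - (a ^ 2 + b ^ 2))) /
        (1 + (a ^ 2 + b ^ 2) - 2 * sS) from by
      rw [add_div, mul_div_assoc, div_self hDpos.ne']]
  congr 1
  ring

lemma sq_lt_one_of_abs_lt {z : ℂ} (hz : ‖z‖ < 1) : z.re ^ 2 + z.im ^ 2 < 1 := by
  have h1 : ‖z‖ ^ 2 < 1 := by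
    nlinarith [norm_nonneg z]
  rw [Complex.sq_norm, Complex.normSq_apply] at h1
  nlinarith

lemma poisson_eq {z : ℂ} (t : ℝ) :
    poisson z t = (1 / (2 * Real.pi)) * ((1 - (z.re ^ 2 + z.im ^ 2)) /
      (1 + (z.re ^ 2 + z.im ^ 2) - 2 * (z.re * Real.cos t + z.im * Real.sin t))) := by
  unfold poisson
  rw [Complex.sq_norm, Complex.sq_norm, Complex.normSq_apply, Complex.normSq_apply]
  simp only [Complex.sub_re, Complex.sub_im, Complex.exp_ofReal_mul_I_re,
    Complex.exp_ofReal_mul_I_im]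
  rw [mul_div_assoc]
  congr 1
  have hpyth := Real.sin_sq_add_cos_sq t
  congr 1
  · ring
  · nlinarith [hpyth]

lemma poisson_cont {z : ℂ} (hz : ‖z‖ < 1) :
    Continuous (fun t => poisson z t) := by
  have hq := sq_lt_one_of_abs_lt hz
  have : (fun t => poisson z t) = fun t => (1 / (2 * Real.pi)) *
      ((1 - (z.re ^ 2 + z.im ^ 2)) /
      (1 + (z.re ^ 2 + z.im ^ 2) - 2 * (z.re * Real.cos t + z.im * Real.sin t))) := by
    funext t; exact poisson_eq t
  rw [this]
  apply Continuous.mul continuous_const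
  apply Continuous.div continuous_const
  · fun_prop
  · intro t; exact (pv_denom_pos hq t).ne'

lemma integral_poisson {z : ℂ} (hz : ‖z‖ < 1) (u v : ℝ) :
    ∫ t in u..v, poisson z t = (Gf z.re z.im v - Gf z.re z.im u) / (2 * Real.pi) := by
  have hq := sq_lt_one_of_abs_lt hz
  have hderiv : ∀ t ∈ Set.uIcc u v, HasDerivAt (fun s => Gf z.re z.im s / (2 * Real.pi))
      (poisson z t) t := by
    intro t _
    have := (Gf_hasDeriv hq t).div_const (2 * Real.pi)
    rw [poisson_eq]
    refine this.congr_deriv ?_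
    have hB := (pv_denom_pos hq t).ne'
    have hpi : Real.pi ≠ 0 := Real.pi_ne_zero
    field_simp
    all_goals try ring
    all_goals tauto
  have hint : IntervalIntegrable (fun t => poisson z t) MeasureTheory.volume u v :=
    (poisson_cont hz).intervalIntegrable u v
  have := intervalIntegral.integral_eq_sub_of_hasDerivAt hderiv hint
  rw [this]
  ring

lemma Gf_period (a b t : ℝ) : Gf a b (t + 2 * Real.pi) = Gf a b t + 2 * Real.pi := by
  simp [Gf, Real.sin_add_two_pi, Real.cos_add_two_pi]
  ring

/-- For a partition `−π < θ₁ < ⋯ < θ_n ≤ π` of the circle with `n ≥ 3`,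
`θ_{n+1} := θ₁ + 2π`, and `f` twice continuously differentiable on `(0,∞)` with
`f″ > 0` there and `f(1) = 0`, the reduced `f`-divergence distance satisfies
`d_f(z) = 0` iff `z = 0`; equivalently, if `φ_j(z) = (θ_{j+1} − θ_j)/(2π)` for all
`j = 1,…,n`, then `z = 0`. -/
theorem reduced_divergence_vanishes_iff
    (n : ℕ) (hn : 3 ≤ n) (θ : ℕ → ℝ)
    (hθ1 : -Real.pi < θ 1) (hθn : θ n ≤ Real.pi)
    (hmono : ∀ j, 1 ≤ j → j < n → θ j < θ (j + 1))
    (hper : θ (n + 1) = θ 1 + 2 * Real.pi)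
    (f : ℝ → ℝ) (hf1 : f 1 = 0)
    (hfC2 : ContDiffOn ℝ 2 f (Set.Ioi 0))
    (hf'' : ∀ x : ℝ, 0 < x → 0 < deriv (deriv f) x)
    (φ : ℕ → ℂ → ℝ)
    (hφ : ∀ j z, φ j z = ∫ t in (θ j)..(θ (j + 1)), poisson z t)
    (d : ℂ → ℝ)
    (hd : ∀ z, d z = ∑ j ∈ Finset.Icc 1 n, φ j 0 * f (φ j z / φ j 0)) :
    ∀ z : ℂ, ‖z‖ < 1 →
      ((d z = 0 ↔ z = 0) ∧
        ((∀ j ∈ Finset.Icc 1 n, φ j z = (θ (j + 1) - θ j) / (2 * Real.pi)) → z = 0)) := by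
  intro z hz
  have hq : z.re ^ 2 + z.im ^ 2 < 1 := sq_lt_one_of_abs_lt hz
  have hπ : (0:ℝ) < 2 * Real.pi := by positivity
  have hstep : ∀ j, 1 ≤ j → j ≤ n → θ j < θ (j + 1) := by
    intro j h1 h2
    rcases lt_or_eq_of_le h2 with h | h
    · exact hmono j h1 h
    · subst h; rw [hper]; linarith [Real.pi_pos]
  have hlt : ∀ i j, 1 ≤ i → i < j → j ≤ n + 1 → θ i < θ j := by
    intro i j h1 hij hj
    induction j with
    | zero => omega
    | succ k ih =>
      rcases Nat.lt_or_ge i k with hik | hik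
      · exact (ih (by omega) (by omega)).trans (hstep k (by omega) (by omega))
      · have hik' : i = k := by omega
        subst hik'; exact hstep i h1 (by omega)
  have hphi0 : ∀ j, φ j (0:ℂ) = (θ (j + 1) - θ j) / (2 * Real.pi) := by
    intro j
    rw [hφ, integral_poisson (by simp : ‖(0:ℂ)‖ < 1)]
    simp [Gf]
  have hw_pos : ∀ j, 1 ≤ j → j ≤ n → 0 < φ j 0 := by
    intro j h1 h2; rw [hphi0]; exact div_pos (sub_pos.2 (hstep j h1 h2)) hπ
  have hphiz : ∀ j, φ j z = (Gf z.re z.im (θ (j + 1)) - Gf z.re z.im (θ j)) / (2 * Real.pi) :=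
    fun j => by rw [hφ, integral_poisson hz]
  -- Injectivity: if all reduced coordinates agree with those of the origin, then z = 0.
  have hinj : (∀ j ∈ Finset.Icc 1 n, φ j z = (θ (j + 1) - θ j) / (2 * Real.pi)) → z = 0 := by
    intro hall
    by_contra hz0
    have hzne : z.re ≠ 0 ∨ z.im ≠ 0 := by
      by_contra hcon; push_neg at hcon; exact hz0 (Complex.ext hcon.1 hcon.2)
    have hH' : ∀ t : ℝ, HasDerivAt (fun t => Gf z.re z.im t - t)
        ((1 - (z.re ^ 2 + z.im ^ 2)) /
          (1 + (z.re ^ 2 + z.im ^ 2) - 2 * (z.re * Real.cos t + z.im * Real.sin t)) - 1) t :=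
      fun t => (Gf_hasDeriv hq t).sub (hasDerivAt_id t)
    have hroll : ∀ j, 1 ≤ j → j ≤ n → ∃ c ∈ Set.Ioo (θ j) (θ (j + 1)),
        z.re * Real.cos c + z.im * Real.sin c = z.re ^ 2 + z.im ^ 2 := by
      intro j h1 h2
      have heq : Gf z.re z.im (θ j) - θ j = Gf z.re z.im (θ (j + 1)) - θ (j + 1) := by
        have h3 := hall j (Finset.mem_Icc.2 ⟨h1, h2⟩)
        rw [hphiz j] at h3
        have h4 : Gf z.re z.im (θ (j + 1)) - Gf z.re z.im (θ j) = θ (j + 1) - θ j := by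
          field_simp at h3; linarith
        linarith
      have hcont : ContinuousOn (fun t => Gf z.re z.im t - t) (Set.Icc (θ j) (θ (j + 1))) :=
        Continuous.continuousOn (by
          rw [continuous_iff_continuousAt]; exact fun t => (hH' t).continuousAt)
      obtain ⟨c, hc, hc0⟩ :=
        exists_hasDerivAt_eq_zero (hstep j h1 h2) hcont heq (fun x _ => hH' x)
      refine ⟨c, hc, ?_⟩
      have hDpos := pv_denom_pos hq c
      have hDne := hDpos.ne'
      field_simp at hc0
      linarith
    obtain ⟨c1, hc1, he1⟩ := hroll 1 le_rfl (by omega)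
    obtain ⟨c2, hc2, he2⟩ := hroll 2 (by omega) (by omega)
    obtain ⟨c3, hc3, he3⟩ := hroll 3 (by omega) (by omega)
    have hc12 : c1 < c2 := hc1.2.trans hc2.1
    have hc23 : c2 < c3 := hc2.2.trans hc3.1
    have hgap : c3 - c1 < 2 * Real.pi := by
      have h4 : θ 4 ≤ θ (n + 1) := by
        rcases Nat.lt_or_ge 4 (n + 1) with h | h
        · exact (hlt 4 (n + 1) (by omega) h (by omega)).le
        · have h5 : 4 = n + 1 := by omega
          rw [h5]
      rw [hper] at h4
      have h5 := hc3.2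
      have h6 := hc1.1
      linarith
    have key : ∀ x y : ℝ, x < y → y - x < 2 * Real.pi →
        z.re * Real.cos x + z.im * Real.sin x = z.re ^ 2 + z.im ^ 2 →
        z.re * Real.cos y + z.im * Real.sin y = z.re ^ 2 + z.im ^ 2 →
        z.im * Real.cos ((x + y) / 2) = z.re * Real.sin ((x + y) / 2) := by
      intro x y hxy hlt2 hx hy
      have h0 : z.re * (Real.cos x - Real.cos y) + z.im * (Real.sin x - Real.sin y) = 0 := by
        linarith
      rw [Real.cos_sub_cos, Real.sin_sub_sin] at h0
      have hsd : Real.sin ((x - y) / 2) ≠ 0 := by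
        have h5 : 0 < Real.sin ((y - x) / 2) :=
          Real.sin_pos_of_pos_of_lt_pi (by linarith) (by linarith)
        have h6 : Real.sin ((x - y) / 2) = -Real.sin ((y - x) / 2) := by
          rw [show (x - y) / 2 = -((y - x) / 2) by ring, Real.sin_neg]
        rw [h6]; exact neg_ne_zero.2 h5.ne'
      have h7 : Real.sin ((x - y) / 2) *
          (z.im * Real.cos ((x + y) / 2) - z.re * Real.sin ((x + y) / 2)) = 0 := by
        linear_combination h0 / 2
      rcases mul_eq_zero.1 h7 with h | h
      · exact absurd h hsd
      · linarith
    have k12 := key c1 c2 hc12 (by linarith) he1 he2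
    have k23 := key c2 c3 hc23 (by linarith) he2 he3
    set m1 := (c1 + c2) / 2 with hm1
    set m2 := (c2 + c3) / 2 with hm2
    have hsin : 0 < Real.sin (m2 - m1) := by
      apply Real.sin_pos_of_pos_of_lt_pi
      · rw [hm1, hm2]; linarith
      · rw [hm1, hm2]; linarith
    have ha0 : z.re * Real.sin (m2 - m1) = 0 := by
      rw [Real.sin_sub]
      linear_combination Real.cos m2 * k12 - Real.cos m1 * k23
    have hb0 : z.im * Real.sin (m2 - m1) = 0 := by
      rw [Real.sin_sub]
      linear_combination Real.sin m2 * k12 - Real.sin m1 * k23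
    have hre : z.re = 0 := by
      rcases mul_eq_zero.1 ha0 with h | h
      · exact h
      · exact absurd h hsin.ne'
    have him : z.im = 0 := by
      rcases mul_eq_zero.1 hb0 with h | h
      · exact h
      · exact absurd h hsin.ne'
    exact hz0 (Complex.ext hre him)
  -- telescoping sums
  have tele : ∀ g : ℕ → ℝ, ∑ j ∈ Finset.Icc 1 n, (g (j + 1) - g j) = g (n + 1) - g 1 := by
    intro g
    rw [← Finset.Ico_add_one_right_eq_Icc, Finset.sum_Ico_eq_sum_range]
    simp only [Nat.add_sub_cancel_left, Nat.succ_sub_one, Nat.add_sub_cancel]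
    calc ∑ i ∈ Finset.range n, (g (1 + i + 1) - g (1 + i))
        = ∑ i ∈ Finset.range n, (g (i + 1 + 1) - g (i + 1)) := by
          apply Finset.sum_congr rfl; intro i _; rw [Nat.add_comm 1 i]
      _ = g (n + 1) - g (0 + 1) := Finset.sum_range_sub (fun i => g (i + 1)) n
      _ = g (n + 1) - g 1 := by norm_num
  have hsumw : ∑ j ∈ Finset.Icc 1 n, φ j 0 = 1 := by
    have h1 : ∀ j ∈ Finset.Icc 1 n, φ j (0:ℂ) =
        θ (j + 1) / (2 * Real.pi) - θ j / (2 * Real.pi) := by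
      intro j _; rw [hphi0, sub_div]
    rw [Finset.sum_congr rfl h1, tele (fun j => θ j / (2 * Real.pi)), hper]
    field_simp
    ring
  have hsumz : ∑ j ∈ Finset.Icc 1 n, φ j z = 1 := by
    have h1 : ∀ j ∈ Finset.Icc 1 n, φ j z =
        Gf z.re z.im (θ (j + 1)) / (2 * Real.pi) - Gf z.re z.im (θ j) / (2 * Real.pi) := by
      intro j _; rw [hphiz, sub_div]
    rw [Finset.sum_congr rfl h1, tele (fun j => Gf z.re z.im (θ j) / (2 * Real.pi)), hper,
      Gf_period]
    field_simp
    ring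
  have hposz : ∀ j, 1 ≤ j → j ≤ n → 0 < φ j z := by
    intro j h1 h2
    rw [hphiz]
    apply div_pos _ hπ
    have hmonoG : StrictMono (Gf z.re z.im) := by
      apply strictMono_of_deriv_pos
      intro t
      rw [(Gf_hasDeriv hq t).deriv]
      exact div_pos (by linarith) (pv_denom_pos hq t)
    exact sub_pos.2 (hmonoG (hstep j h1 h2))
  constructor
  · constructor
    · -- d z = 0 → z = 0
      intro hdz
      by_contra hz0
      have hconv : StrictConvexOn ℝ (Set.Ioi 0) f := by
        apply strictConvexOn_of_deriv2_pos (convex_Ioi 0) hfC2.continuousOn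
        intro x hx
        rw [interior_Ioi] at hx
        exact hf'' x hx
      have hdf1 : DifferentiableAt ℝ f 1 :=
        (hfC2.differentiableOn (by norm_num)).differentiableAt (Ioi_mem_nhds one_pos)
      set c := deriv f 1 with hc
      have tan_lt : ∀ x : ℝ, 0 < x → x ≠ 1 → c * (x - 1) < f x := by
        intro x hx hne
        rcases lt_or_gt_of_ne hne with h | h
        · have h5 := hconv.slope_lt_of_hasDerivAt (Set.mem_Ioi.2 hx) (Set.mem_Ioi.2 one_pos) h
            hdf1.hasDerivAt
          rw [slope_def_field] at h5
          have h6 : (f 1 - f x) / (1 - x) < c := h5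
          rw [div_lt_iff₀ (by linarith)] at h6
          rw [hf1] at h6
          nlinarith
        · have h5 := hconv.lt_slope_of_hasDerivAt (Set.mem_Ioi.2 one_pos) (Set.mem_Ioi.2 hx) h
            hdf1.hasDerivAt
          rw [slope_def_field] at h5
          have h6 : c < (f x - f 1) / (x - 1) := h5
          rw [lt_div_iff₀ (by linarith)] at h6
          rw [hf1] at h6
          nlinarith
      have tan_le : ∀ x : ℝ, 0 < x → c * (x - 1) ≤ f x := by
        intro x hx
        rcases eq_or_ne x 1 with h | h
        · subst h; rw [hf1]; norm_num
        · exact (tan_lt x hx h).le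
      have hsum_lb : ∑ j ∈ Finset.Icc 1 n, φ j 0 * (c * (φ j z / φ j 0 - 1)) = 0 := by
        have h1 : ∀ j ∈ Finset.Icc 1 n, φ j 0 * (c * (φ j z / φ j 0 - 1)) =
            c * (φ j z - φ j 0) := by
          intro j hj
          obtain ⟨ha, hb⟩ := Finset.mem_Icc.1 hj
          have hw := (hw_pos j ha hb).ne'
          field_simp
          try ring
        rw [Finset.sum_congr rfl h1, ← Finset.mul_sum, Finset.sum_sub_distrib, hsumz, hsumw]
        ring
      have hexists : ∃ j ∈ Finset.Icc 1 n, φ j z / φ j 0 ≠ 1 := by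
        by_contra hcon
        push_neg at hcon
        apply hz0
        apply hinj
        intro j hj
        obtain ⟨ha, hb⟩ := Finset.mem_Icc.1 hj
        have hw := (hw_pos j ha hb).ne'
        have h2 : φ j z = φ j 0 := by
          have h3 := hcon j hj
          field_simp at h3
          exact h3
        rw [h2, hphi0]
      have hlt_sum : (0:ℝ) < d z := by
        rw [hd]
        have hbound : ∀ j ∈ Finset.Icc 1 n,
            φ j 0 * (c * (φ j z / φ j 0 - 1)) ≤ φ j 0 * f (φ j z / φ j 0) := by
          intro j hj
          obtain ⟨ha, hb⟩ := Finset.mem_Icc.1 hj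
          apply mul_le_mul_of_nonneg_left _ (hw_pos j ha hb).le
          exact tan_le _ (div_pos (hposz j ha hb) (hw_pos j ha hb))
        have hstrict : ∃ j ∈ Finset.Icc 1 n,
            φ j 0 * (c * (φ j z / φ j 0 - 1)) < φ j 0 * f (φ j z / φ j 0) := by
          obtain ⟨j, hj, hne⟩ := hexists
          obtain ⟨ha, hb⟩ := Finset.mem_Icc.1 hj
          exact ⟨j, hj, mul_lt_mul_of_pos_left
            (tan_lt _ (div_pos (hposz j ha hb) (hw_pos j ha hb)) hne) (hw_pos j ha hb)⟩
        calc (0:ℝ) = ∑ j ∈ Finset.Icc 1 n, φ j 0 * (c * (φ j z / φ j 0 - 1)) := hsum_lb.symm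
          _ < ∑ j ∈ Finset.Icc 1 n, φ j 0 * f (φ j z / φ j 0) :=
            Finset.sum_lt_sum hbound hstrict
      exact absurd hdz hlt_sum.ne'
    · -- z = 0 → d z = 0
      intro hz0
      subst hz0
      rw [hd]
      apply Finset.sum_eq_zero
      intro j hj
      obtain ⟨ha, hb⟩ := Finset.mem_Icc.1 hj
      rw [div_self (hw_pos j ha hb).ne', hf1, mul_zero]
  · exact hinj
end

section
/- Let z be a point of the open unit disk and θ ∈ ℝ, and set v = e^{iθ} − z. If u ∈ ℂ satisfies |u| = 1, u ≠ e^{iθ}, and u − z = s·(e^{iθ} − z) for some real number s (i.e., u lies on the line through z and e^{iθ}), then with w = u − z one has 1/conj(v) = −w/(1 − |z|²). -/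
/-- **Lemma (intersecting chords).**  Let `z` be in the open unit disk, `θ ∈ ℝ`,
`v = e^{iθ} − z`.  If `u` is on the unit circle, `u ≠ e^{iθ}`, and `u` lies on the line
through `z` and `e^{iθ}` (i.e. `u − z = s·(e^{iθ} − z)` for some real `s`), then with
`w = u − z` one has `1/conj(v) = −w/(1 − |z|²)`. -/
theorem one_div_conj_eq_neg_antipode_chord
    (z : ℂ) (hz : ‖z‖ < 1) (θ : ℝ) (u : ℂ)
    (hu : ‖u‖ = 1) (hune : u ≠ Complex.exp (θ * Complex.I))
    (hline : ∃ s : ℝ, u - z = (s : ℂ) * (Complex.exp (θ * Complex.I) - z)) :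
    1 / (starRingEnd ℂ) (Complex.exp (θ * Complex.I) - z) =
      -(u - z) / ((1 : ℂ) - ((‖z‖ : ℝ) : ℂ) ^ 2) := by
  obtain ⟨s, hs⟩ := hline
  set e := Complex.exp (θ * Complex.I) with he_def
  have habs_e : ‖e‖ = 1 := by
    rw [he_def]; exact Complex.norm_exp_ofReal_mul_I θ
  have he : e * (starRingEnd ℂ) e = 1 := by
    rw [Complex.mul_conj, Complex.normSq_eq_norm_sq, habs_e]; norm_num
  have hu2 : u * (starRingEnd ℂ) u = 1 := by
    rw [Complex.mul_conj, Complex.normSq_eq_norm_sq, hu]; norm_num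
  have hC : z * (starRingEnd ℂ) z = (((‖z‖ : ℝ) : ℂ)) ^ 2 := by
    rw [Complex.mul_conj, Complex.normSq_eq_norm_sq]; push_cast; ring
  have hcs : (starRingEnd ℂ) u - (starRingEnd ℂ) z
      = (s : ℂ) * ((starRingEnd ℂ) e - (starRingEnd ℂ) z) := by
    have := congrArg (starRingEnd ℂ) hs
    simpa [map_sub, map_mul, Complex.conj_ofReal] using this
  have hzne : z ≠ e := fun h => by rw [h, habs_e] at hz; exact lt_irrefl 1 hz
  have hv : e - z ≠ 0 := sub_ne_zero.mpr (Ne.symm hzne)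
  have hcv : (starRingEnd ℂ) e - (starRingEnd ℂ) z ≠ 0 := by
    intro h
    apply hv
    have := congrArg (starRingEnd ℂ) h
    simpa [map_sub] using this
  have hsne : (1 : ℂ) - (s : ℂ) ≠ 0 := by
    intro h
    apply hune
    have hs1 : (s : ℂ) = 1 := by linear_combination -h
    rw [hs1, one_mul] at hs
    linear_combination hs
  have hDne : ((1 : ℂ) - ((‖z‖ : ℝ) : ℂ) ^ 2) ≠ 0 := by
    have h1 : ‖z‖ ^ 2 < 1 := by nlinarith [norm_nonneg z]
    intro h
    have h2 : ((1 - ‖z‖ ^ 2 : ℝ) : ℂ) = 0 := by push_cast; linear_combination h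
    have := Complex.ofReal_eq_zero.mp h2
    linarith
  have hu2' : (z + (s:ℂ)*(e-z)) *
      ((starRingEnd ℂ) z + (s:ℂ)*((starRingEnd ℂ) e - (starRingEnd ℂ) z)) = 1 := by
    linear_combination hu2 - (starRingEnd ℂ) u * hs - (z + (s:ℂ)*(e-z)) * hcs
  have key : ((1 : ℂ) - (s : ℂ)) *
      (((starRingEnd ℂ) e - (starRingEnd ℂ) z) * (-(u - z))
        - (1 - ((‖z‖ : ℝ) : ℂ) ^ 2)) = 0 := by
    linear_combination (-(s : ℂ)) * he + hu2' + ((s:ℂ) - 1) * hC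
      + (-(1 - (s:ℂ)) * ((starRingEnd ℂ) e - (starRingEnd ℂ) z)) * hs
  have main : ((starRingEnd ℂ) e - (starRingEnd ℂ) z) * (-(u - z))
      = 1 - ((‖z‖ : ℝ) : ℂ) ^ 2 := by
    rcases mul_eq_zero.mp key with h | h
    · exact absurd h hsne
    · linear_combination h
  rw [map_sub]
  field_simp
  linear_combination -main
end

section
/- Let −π < θ_1 < θ_2 < ⋯ < θ_n ≤ π with θ_{n+1} := θ_1 + 2π, and fix j ∈ {1,…,n}. Then the reduced coordinate φ_j, as a real-valued function on the open unit disk, is differentiable in the real (Fréchet) sense, and its gradient at every z with |z| < 1 is ∇φ_j(z) = (i/(π·(1 − |z|²)))·(A_z(θ_{j+1}) − A_z(θ_j)). -/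
/-- The antipode of `e^{iθ}` relative to a point `z` of the open unit disk:
`A_z(θ) = −(e^{iθ} − z)·e^{−iθ}/conj(e^{iθ} − z)`; it is the second intersection of the
line through `z` and `e^{iθ}` with the unit circle. -/
noncomputable def antipode (z : ℂ) (θ : ℝ) : ℂ :=
  -(Complex.exp (θ * Complex.I) - z) * Complex.exp (-θ * Complex.I) /
    (starRingEnd ℂ) (Complex.exp (θ * Complex.I) - z)

open Complex

lemma abs_exp_eq (t : ℝ) : ‖Complex.exp (-((t:ℂ) * I))‖ = 1 := by
  rw [show (-((t:ℂ) * I)) = ((-t : ℝ) : ℂ) * I by push_cast; ring]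
  exact Complex.norm_exp_ofReal_mul_I _

lemma re_pos (z : ℂ) (hz : ‖z‖ < 1) (t : ℝ) :
    0 < (1 - z * Complex.exp (-((t:ℂ) * I))).re := by
  have h1 : ‖z * Complex.exp (-((t:ℂ) * I))‖ < 1 := by
    rw [norm_mul, abs_exp_eq, mul_one]; exact hz
  have h2 := Complex.abs_re_le_norm (z * Complex.exp (-((t:ℂ) * I)))
  have h3 : (z * Complex.exp (-((t:ℂ) * I))).re < 1 :=
    lt_of_le_of_lt (le_trans (le_abs_self _) h2) h1
  simp only [Complex.sub_re, Complex.one_re]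
  linarith

lemma u_ne (z : ℂ) (hz : ‖z‖ < 1) (t : ℝ) :
    (1 - z * Complex.exp (-((t:ℂ) * I))) ≠ 0 := by
  intro h
  have := re_pos z hz t
  rw [h] at this; simp at this

lemma re_cast (w : ℂ) : (w.re : ℂ) = (w + (starRingEnd ℂ) w) * 2⁻¹ := by
  rw [Complex.add_conj]; push_cast; ring

lemma exp_inv (t : ℝ) : Complex.exp ((t:ℂ) * I) = (Complex.exp (-((t:ℂ) * I)))⁻¹ := by
  rw [Complex.exp_neg, inv_inv]

lemma conj_exp (t : ℝ) : (starRingEnd ℂ) (Complex.exp (-((t:ℂ) * I)))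
    = (Complex.exp (-((t:ℂ) * I)))⁻¹ := by
  rw [← exp_inv, ← Complex.exp_conj]; congr 1; simp [Complex.conj_ofReal]

lemma cu_ne (z : ℂ) (hz : ‖z‖ < 1) (t : ℝ) :
    (1 - (starRingEnd ℂ) z * (Complex.exp (-((t:ℂ) * I)))⁻¹) ≠ 0 := by
  have := u_ne z hz t
  intro h
  apply this
  have h2 := congrArg (starRingEnd ℂ) h
  simp only [map_sub, map_mul, map_inv₀, map_one, map_zero, conj_exp, Complex.conj_conj,
    inv_inv] at h2
  exact h2

lemma ze_ne (z : ℂ) (hz : ‖z‖ < 1) (t : ℝ) :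
    z - Complex.exp ((t:ℂ) * I) ≠ 0 := by
  intro h
  rw [sub_eq_zero] at h
  rw [h, exp_inv, norm_inv, abs_exp_eq] at hz
  norm_num at hz

lemma alg_id (w c E X p : ℂ) (hp : p ≠ 0) (hX : E * X = 1) (h1 : 1 - w*E ≠ 0)
    (h2 : 1 - c*X ≠ 0) (hX0 : X ≠ 0) (h3 : c - E ≠ 0) :
    1/(2*p) * (1 - w*c) / ((-X * (1 - w*E)) * (c - E)) =
      1/(2*p) + p⁻¹ * ((w*E/(1-w*E) + c*X/(1-c*X)) * 2⁻¹) := by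
  obtain ⟨u, hu⟩ : ∃ u, 1 - w*E = u := ⟨_, rfl⟩
  obtain ⟨v, hv⟩ : ∃ v, 1 - c*X = v := ⟨_, rfl⟩
  rw [hu] at h1
  rw [hv] at h2
  rw [hu, hv]
  field_simp [h1, h2, hp, hX0, h3]
  rw [← hu, ← hv]
  linear_combination (1 - w*c + w*c*X*(c-E)) * hX

lemma hasDerivAt_prim (z : ℂ) (hz : ‖z‖ < 1) (t : ℝ) :
    HasDerivAt (fun s : ℝ => s / (2 * Real.pi) +
      (Real.pi)⁻¹ * (Complex.log (1 - z * Complex.exp (-s * Complex.I))).im)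
      (poisson z t) t := by
  have hslit : (1 - z * Complex.exp (-t * Complex.I)) ∈ slitPlane := by
    refine mem_slitPlane_iff.mpr (Or.inl ?_)
    have := re_pos z hz t
    rwa [show (-((t:ℂ) * I)) = -(t:ℂ) * I by ring] at this
  have h0 : HasDerivAt (fun s : ℝ => ((s:ℂ))) 1 t := by
    simpa using (hasDerivAt_id t).ofReal_comp
  have h1 : HasDerivAt (fun s : ℝ => 1 - z * Complex.exp (-s * Complex.I))
      (-(z * (Complex.exp (-t * Complex.I) * (-1 * I)))) t := by
    have := (((h0.neg.mul_const I).cexp).const_mul z).const_sub 1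
    simpa using this
  have h2 := h1.clog_real hslit
  have h3 := (Complex.imCLM.hasFDerivAt.comp_hasDerivAt t h2.hasFDerivAt).const_mul (Real.pi)⁻¹
  have h4 := ((hasDerivAt_id t).div_const (2 * Real.pi)).add h3
  refine h4.congr_deriv ?_; symm
  show poisson z t = 1 / (2 * Real.pi) + _
  simp only [neg_mul]
  have hu := u_ne z hz t
  have he0 : Complex.exp (-((t:ℂ) * I)) ≠ 0 := Complex.exp_ne_zero _
  have hcu := cu_ne z hz t
  have hze := ze_ne z hz t
  have hcze : (starRingEnd ℂ) z - Complex.exp (-((t:ℂ) * I)) ≠ 0 := by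
    intro h
    apply ze_ne z hz t
    have : (starRingEnd ℂ) ((starRingEnd ℂ) z - Complex.exp (-((t:ℂ) * I))) = 0 := by
      rw [h]; simp
    rw [map_sub, Complex.conj_conj, conj_exp, ← exp_inv] at this
    exact this
  rw [show -(z * (Complex.exp (-((t:ℂ) * I)) * -(1 * I))) / (1 - z * Complex.exp (-((t:ℂ) * I)))
      = I * (z * Complex.exp (-((t:ℂ) * I)) / (1 - z * Complex.exp (-((t:ℂ) * I)))) by ring]
  rw [show Complex.imCLM (I * (z * Complex.exp (-((t:ℂ) * I)) / (1 - z * Complex.exp (-((t:ℂ) * I)))))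
      = (z * Complex.exp (-((t:ℂ) * I)) / (1 - z * Complex.exp (-((t:ℂ) * I)))).re by
    simp [Complex.mul_im]]
  unfold poisson
  rw [← Complex.ofReal_inj]
  have hz2 : ((‖z‖ : ℂ))^2 = z * (starRingEnd ℂ) z := by
    rw [← Complex.ofReal_pow, Complex.sq_norm]; exact (Complex.mul_conj z).symm
  have hZ2 : ((‖z - Complex.exp ((t:ℂ) * I)‖ : ℂ))^2
      = (z - Complex.exp ((t:ℂ) * I)) * (starRingEnd ℂ) (z - Complex.exp ((t:ℂ) * I)) := by
    rw [← Complex.ofReal_pow, Complex.sq_norm]; exact (Complex.mul_conj _).symm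
  push_cast
  rw [re_cast, hz2, hZ2]
  simp only [map_sub, map_mul, map_div₀, map_inv₀, map_one, conj_exp, Complex.conj_conj,
    inv_inv, exp_inv]
  rw [exp_inv] at hze
  have hπ : (Real.pi : ℂ) ≠ 0 := by exact_mod_cast Real.pi_ne_zero
  have hA : z * Complex.exp (-((t:ℂ) * I)) - 1 ≠ 0 := fun h => hu (by linear_combination -h)
  have hB : Complex.exp (-((t:ℂ) * I)) - (starRingEnd ℂ) z ≠ 0 :=
    fun h => hcze (by linear_combination -h)
  rw [show z - (Complex.exp (-((t:ℂ) * I)))⁻¹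
      = -(Complex.exp (-((t:ℂ) * I)))⁻¹ * (1 - z * Complex.exp (-((t:ℂ) * I))) by
    field_simp; ring]
  obtain ⟨X, hX, hXE⟩ : ∃ X, Complex.exp (-((t:ℂ) * I)) * X = 1
      ∧ X = (Complex.exp (-((t:ℂ) * I)))⁻¹ := ⟨_, mul_inv_cancel₀ he0, rfl⟩
  rw [← hXE] at hcu ⊢
  have hX0 : X ≠ 0 := fun h => by simp [h] at hX
  exact alg_id z ((starRingEnd ℂ) z) (Complex.exp (-((t:ℂ) * I))) X (Real.pi : ℂ)
    hπ hX hu hcu hX0 hcze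

lemma poisson_continuous (z : ℂ) (hz : ‖z‖ < 1) : Continuous (poisson z) := by
  unfold poisson
  apply Continuous.div continuous_const
  · exact (continuous_norm.comp (continuous_const.sub (Complex.continuous_exp.comp
      (Complex.continuous_ofReal.mul continuous_const)))).pow 2
  · exact fun t => pow_ne_zero 2 (norm_ne_zero_iff.mpr (ze_ne z hz t))

lemma integral_poisson_s8 (z : ℂ) (hz : ‖z‖ < 1) (a b : ℝ) :
    ∫ t in a..b, poisson z t =
      (b / (2 * Real.pi) + (Real.pi)⁻¹ * (Complex.log (1 - z * Complex.exp (-b * Complex.I))).im)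
      - (a / (2 * Real.pi) + (Real.pi)⁻¹ * (Complex.log (1 - z * Complex.exp (-a * Complex.I))).im) :=
  intervalIntegral.integral_eq_sub_of_hasDerivAt (fun t _ => hasDerivAt_prim z hz t)
    ((poisson_continuous z hz).intervalIntegrable a b)

lemma hasFDerivAt_logim (z : ℂ) (hz : ‖z‖ < 1) (t : ℝ) :
    HasFDerivAt (fun w : ℂ => (Complex.log (1 - w * Complex.exp (-t * Complex.I))).im)
      (Complex.imCLM.comp ((ContinuousLinearMap.smulRight (1 : ℂ →L[ℂ] ℂ)
        (-Complex.exp (-t * Complex.I) / (1 - z * Complex.exp (-t * Complex.I)))).restrictScalars ℝ)) z := by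
  have hslit : (1 - z * Complex.exp (-t * Complex.I)) ∈ slitPlane := by
    refine mem_slitPlane_iff.mpr (Or.inl ?_)
    have := re_pos z hz t
    rwa [show (-((t:ℂ) * I)) = -(t:ℂ) * I by ring] at this
  have h1 : HasDerivAt (fun w : ℂ => 1 - w * Complex.exp (-t * Complex.I))
      (-Complex.exp (-t * Complex.I)) z := by
    simpa using ((hasDerivAt_id z).mul_const (Complex.exp (-(t:ℂ) * I))).const_sub 1
  have h2 := h1.clog hslit
  exact Complex.imCLM.hasFDerivAt.comp z (h2.hasFDerivAt.restrictScalars ℝ)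

lemma conj_antipode (z : ℂ) (hz : ‖z‖ < 1) (t : ℝ) :
    (starRingEnd ℂ) (antipode z t) =
      (1 - ((‖z‖ : ℂ))^2) *
        (-Complex.exp (-t * Complex.I) / (1 - z * Complex.exp (-t * Complex.I)))
      + (starRingEnd ℂ) z := by
  unfold antipode
  have he0 : Complex.exp (-((t:ℂ) * I)) ≠ 0 := Complex.exp_ne_zero _
  have hu := u_ne z hz t
  have hze := ze_ne z hz t
  have hz2 : ((‖z‖ : ℂ))^2 = z * (starRingEnd ℂ) z := by
    rw [← Complex.ofReal_pow, Complex.sq_norm]; exact (Complex.mul_conj z).symm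
  rw [hz2]
  simp only [neg_mul, map_div₀, map_neg, map_mul, map_sub]
  simp only [show (starRingEnd ℂ) (Complex.exp ((t:ℂ) * I)) = Complex.exp (-((t:ℂ) * I)) by
      rw [← Complex.exp_conj]; congr 1; simp [Complex.conj_ofReal],
    conj_exp t, Complex.conj_conj, exp_inv, map_inv₀, inv_inv]
  have hze2 : (Complex.exp (-((t:ℂ) * I)))⁻¹ - z ≠ 0 := by
    rw [← exp_inv]
    intro h
    exact hze (by linear_combination -h)
  obtain ⟨X, hX, hXE⟩ : ∃ X, Complex.exp (-((t:ℂ) * I)) * X = 1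
      ∧ X = (Complex.exp (-((t:ℂ) * I)))⁻¹ := ⟨_, mul_inv_cancel₀ he0, rfl⟩
  rw [← hXE] at hze2 ⊢
  have hX0 : X ≠ 0 := fun h => by simp [h] at hX
  field_simp [hu, hX0, hze2, show 1 - Complex.exp (-((t:ℂ) * I)) * z ≠ 0 by rwa [mul_comm]]
  linear_combination (z * (Complex.exp (-((t:ℂ) * I)) - (starRingEnd ℂ) z)) * hX

/-- **Gradient of a reduced coordinate.**  For a partition `−π < θ₁ < ⋯ < θ_n ≤ π` of the
circle with `θ_{n+1} := θ₁ + 2π` and `j ∈ {1,…,n}`, the reduced coordinate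
`φ_j(z) = ∫_{θ_j}^{θ_{j+1}} P(z,θ)dθ` is Fréchet differentiable on the open unit disk with
gradient `∇φ_j(z) = (i/(π(1 − |z|²)))·(A_z(θ_{j+1}) − A_z(θ_j))`. -/
theorem grad_reduced_coordinate
    (n : ℕ) (θ : ℕ → ℝ)
    (hθ1 : -Real.pi < θ 1) (hθn : θ n ≤ Real.pi)
    (hmono : ∀ k, 1 ≤ k → k < n → θ k < θ (k + 1))
    (hper : θ (n + 1) = θ 1 + 2 * Real.pi)
    (j : ℕ) (hj : j ∈ Finset.Icc 1 n)
    (φ : ℂ → ℝ)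
    (hφ : ∀ z, φ z = ∫ t in (θ j)..(θ (j + 1)), poisson z t) :
    ∀ z : ℂ, ‖z‖ < 1 →
      ∃ L : ℂ →L[ℝ] ℝ, HasFDerivAt φ L z ∧
        ∀ h : ℂ, L h =
          ((starRingEnd ℂ)
            (Complex.I / ((Real.pi : ℂ) * (1 - (‖z‖ : ℂ) ^ 2)) *
              (antipode z (θ (j + 1)) - antipode z (θ j))) * h).re := by
  intro z hz
  have hg := ((((hasFDerivAt_logim z hz (θ (j+1))).const_mul (Real.pi)⁻¹).const_add
      (θ (j+1) / (2 * Real.pi))).sub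
    (((hasFDerivAt_logim z hz (θ j)).const_mul (Real.pi)⁻¹).const_add
      (θ j / (2 * Real.pi))))
  have hev : φ =ᶠ[nhds z] (fun w : ℂ =>
      (θ (j+1) / (2 * Real.pi) +
        (Real.pi)⁻¹ * (Complex.log (1 - w * Complex.exp (-(θ (j+1)) * Complex.I))).im)
      - (θ j / (2 * Real.pi) +
        (Real.pi)⁻¹ * (Complex.log (1 - w * Complex.exp (-(θ j) * Complex.I))).im)) := by
    have hball : Metric.ball (0:ℂ) 1 ∈ nhds z :=
      Metric.isOpen_ball.mem_nhds (by simpa [Complex.dist_eq] using hz)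
    refine Filter.eventuallyEq_of_mem hball (fun w hw => ?_)
    have hw' : ‖w‖ < 1 := by
      simpa [Complex.dist_eq] using hw
    rw [hφ w, integral_poisson_s8 w hw' (θ j) (θ (j+1))]
  refine ⟨_, hg.congr_of_eventuallyEq hev, ?_⟩
  intro h
  have hπ : (Real.pi : ℂ) ≠ 0 := by exact_mod_cast Real.pi_ne_zero
  have hKey : (starRingEnd ℂ) (Complex.I / ((Real.pi : ℂ) * (1 - (‖z‖ : ℂ) ^ 2)) *
      (antipode z (θ (j + 1)) - antipode z (θ j)))
      = -Complex.I * ((Real.pi : ℂ))⁻¹ *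
        ((-Complex.exp (-(θ (j+1)) * Complex.I) / (1 - z * Complex.exp (-(θ (j+1)) * Complex.I)))
        - (-Complex.exp (-(θ j) * Complex.I) / (1 - z * Complex.exp (-(θ j) * Complex.I)))) := by
    rw [map_mul, map_div₀, map_sub, conj_antipode z hz (θ (j+1)), conj_antipode z hz (θ j),
      Complex.conj_I]
    rw [show (starRingEnd ℂ) ((Real.pi : ℂ) * (1 - (‖z‖ : ℂ) ^ 2))
        = (Real.pi : ℂ) * (1 - (‖z‖ : ℂ) ^ 2) by
      simp [map_mul, map_sub, map_one, map_pow, Complex.conj_ofReal]]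
    have hs : (1 - (‖z‖ : ℂ) ^ 2) ≠ 0 := by
      have h1 : (‖z‖) ^ 2 < 1 := by nlinarith [norm_nonneg z]
      rw [show (1 - (‖z‖ : ℂ) ^ 2) = ((1 - (‖z‖) ^ 2 : ℝ) : ℂ) by
        push_cast; ring]
      exact Complex.ofReal_ne_zero.mpr (by linarith)
    obtain ⟨A, hA⟩ : ∃ A, -Complex.exp (-(θ (j+1)) * Complex.I)
        / (1 - z * Complex.exp (-(θ (j+1)) * Complex.I)) = A := ⟨_, rfl⟩
    obtain ⟨B, hB⟩ : ∃ B, -Complex.exp (-(θ j) * Complex.I)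
        / (1 - z * Complex.exp (-(θ j) * Complex.I)) = B := ⟨_, rfl⟩
    rw [hA, hB]
    field_simp
    ring
  rw [hKey]
  simp only [ContinuousLinearMap.coe_sub', Pi.sub_apply, ContinuousLinearMap.coe_smul',
    Pi.smul_apply, ContinuousLinearMap.coe_comp', Function.comp_apply,
    ContinuousLinearMap.coe_restrictScalars', ContinuousLinearMap.smulRight_apply,
    ContinuousLinearMap.one_apply, Complex.imCLM_apply, smul_eq_mul]
  obtain ⟨A, hA⟩ : ∃ A, -Complex.exp (-(θ (j+1)) * Complex.I)
      / (1 - z * Complex.exp (-(θ (j+1)) * Complex.I)) = A := ⟨_, rfl⟩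
  obtain ⟨B, hB⟩ : ∃ B, -Complex.exp (-(θ j) * Complex.I)
      / (1 - z * Complex.exp (-(θ j) * Complex.I)) = B := ⟨_, rfl⟩
  rw [hA, hB, ← Complex.ofReal_inv]
  simp only [Complex.mul_re, Complex.mul_im, Complex.sub_re, Complex.sub_im, Complex.neg_re,
    Complex.neg_im, Complex.I_re, Complex.I_im, Complex.ofReal_re, Complex.ofReal_im]
  ring
end

section
/- Let a < b be real numbers with b − a ≤ 2π, let c = (a + b)/2, and let w : [a,b] → ℝ be integrable and monotone nondecreasing. Then ∫_a^b w(ψ)·sin(c − ψ) dψ ≤ 0, and equality holds if and only if w is almost everywhere constant on [a,b]. -/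
open MeasureTheory

/-- Let `a < b` with `b − a ≤ 2π`, `c = (a+b)/2`, and let `w` be integrable and monotone
nondecreasing on `[a,b]`.  Then `∫_a^b w(ψ)·sin(c − ψ) dψ ≤ 0`, with equality iff `w` is
almost everywhere constant on `[a,b]`. -/
theorem monotone_sin_integral_nonpos
    (a b : ℝ) (hab : a < b) (hlen : b - a ≤ 2 * Real.pi)
    (c : ℝ) (hc : c = (a + b) / 2)
    (w : ℝ → ℝ)
    (hint : IntegrableOn w (Set.Icc a b))
    (hmono : MonotoneOn w (Set.Icc a b)) :
    (∫ ψ in a..b, w ψ * Real.sin (c - ψ)) ≤ 0 ∧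
    ((∫ ψ in a..b, w ψ * Real.sin (c - ψ)) = 0 ↔
      ∃ k : ℝ, ∀ᵐ ψ ∂(volume.restrict (Set.Icc a b)), w ψ = k) := by
  have hac : a < c := by rw [hc]; linarith
  have hcb : c < b := by rw [hc]; linarith
  have hcapi : c - a ≤ Real.pi := by rw [hc]; linarith
  -- basic integrability facts
  have hw : IntervalIntegrable w volume a b := by
    apply MeasureTheory.IntegrableOn.intervalIntegrable
    rwa [Set.uIcc_of_le hab.le]
  have hsin : Continuous fun ψ : ℝ => Real.sin (c - ψ) :=
    Real.continuous_sin.comp (continuous_const.sub continuous_id)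
  have hf : IntervalIntegrable (fun ψ => w ψ * Real.sin (c - ψ)) volume a b :=
    hw.mul_continuousOn hsin.continuousOn
  have hf1 : IntervalIntegrable (fun ψ => w ψ * Real.sin (c - ψ)) volume a c :=
    hf.mono_set (by rw [Set.uIcc_of_le hac.le, Set.uIcc_of_le hab.le]
                    exact Set.Icc_subset_Icc le_rfl hcb.le)
  have hf2 : IntervalIntegrable (fun ψ => w ψ * Real.sin (c - ψ)) volume c b :=
    hf.mono_set (by rw [Set.uIcc_of_le hcb.le, Set.uIcc_of_le hab.le]
                    exact Set.Icc_subset_Icc hac.le le_rfl)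
  have hwc : IntervalIntegrable w volume c b :=
    hw.mono_set (by rw [Set.uIcc_of_le hcb.le, Set.uIcc_of_le hab.le]
                    exact Set.Icc_subset_Icc hac.le le_rfl)
  have hwr : IntervalIntegrable (fun ψ => w (a + b - ψ)) volume a c := by
    have h := hwc.comp_sub_left (a + b)
    have h1 : a + b - c = c := by rw [hc]; ring
    have h2 : a + b - b = a := by ring
    rw [h1, h2] at h
    exact h.symm
  have hwrs : IntervalIntegrable (fun ψ => w (a + b - ψ) * Real.sin (c - ψ)) volume a c :=
    hwr.mul_continuousOn hsin.continuousOn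
  set q : ℝ → ℝ := fun ψ => (w (a + b - ψ) - w ψ) * Real.sin (c - ψ) with hqdef
  have hqint : IntervalIntegrable q volume a c := by
    have h := hwrs.sub hf1
    have : (fun ψ => w (a + b - ψ) * Real.sin (c - ψ) - w ψ * Real.sin (c - ψ)) = q := by
      funext ψ; simp only [hqdef]; ring
    rwa [this] at h
  -- pointwise nonnegativity of q on [a,c]
  have hqpt : ∀ u ∈ Set.Icc a c, 0 ≤ q u := by
    intro u hu
    have hu1 : u ∈ Set.Icc a b := ⟨hu.1, hu.2.trans hcb.le⟩
    have huc : u ≤ c := hu.2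
    have hu2 : a + b - u ∈ Set.Icc a b := by
      rw [hc] at huc
      exact ⟨by linarith, by linarith [hu.1]⟩
    have hle : u ≤ a + b - u := by rw [hc] at huc; linarith
    have hwle : w u ≤ w (a + b - u) := hmono hu1 hu2 hle
    have hs : 0 ≤ Real.sin (c - u) :=
      Real.sin_nonneg_of_nonneg_of_le_pi (by linarith [hu.2]) (by linarith [hu.1])
    exact mul_nonneg (by linarith) hs
  -- the key identity: I = -∫_a^c q
  have hIQ : (∫ ψ in a..b, w ψ * Real.sin (c - ψ)) = -∫ ψ in a..c, q ψ := by
    have hsplit : (∫ ψ in a..c, w ψ * Real.sin (c - ψ)) +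
        (∫ ψ in c..b, w ψ * Real.sin (c - ψ)) = ∫ ψ in a..b, w ψ * Real.sin (c - ψ) :=
      intervalIntegral.integral_add_adjacent_intervals hf1 hf2
    have hrefl : (∫ ψ in c..b, w ψ * Real.sin (c - ψ)) =
        -∫ ψ in a..c, w (a + b - ψ) * Real.sin (c - ψ) := by
      have h := intervalIntegral.integral_comp_sub_left
        (a := a) (b := c) (fun ψ => w ψ * Real.sin (c - ψ)) (a + b)
      have h1 : a + b - c = c := by rw [hc]; ring
      have h2 : a + b - a = b := by ring
      rw [h1, h2] at h
      rw [← h]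
      have : ∀ ψ : ℝ, w (a + b - ψ) * Real.sin (c - (a + b - ψ)) =
          -(w (a + b - ψ) * Real.sin (c - ψ)) := by
        intro ψ
        have : c - (a + b - ψ) = -(c - ψ) := by rw [hc]; ring
        rw [this, Real.sin_neg]; ring
      rw [intervalIntegral.integral_congr (g := fun ψ => -(w (a + b - ψ) * Real.sin (c - ψ)))
        (fun ψ _ => this ψ), intervalIntegral.integral_neg]
    have hsub : (∫ ψ in a..c, q ψ) =
        (∫ ψ in a..c, w (a + b - ψ) * Real.sin (c - ψ)) -
        (∫ ψ in a..c, w ψ * Real.sin (c - ψ)) := by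
      rw [← intervalIntegral.integral_sub hwrs hf1]
      apply intervalIntegral.integral_congr
      intro ψ _
      simp only [hqdef]; ring
    rw [← hsplit, hrefl, hsub]; ring
  have hQ0 : 0 ≤ ∫ ψ in a..c, q ψ :=
    intervalIntegral.integral_nonneg hac.le hqpt
  constructor
  · rw [hIQ]; linarith
  constructor
  · -- equality implies a.e. constant
    intro hI0
    have hQeq : (∫ ψ in a..c, q ψ) = 0 := by rw [hIQ] at hI0; linarith
    have hqae : 0 ≤ᵐ[volume.restrict (Set.Ioc a c)] q :=
      ae_restrict_of_forall_mem measurableSet_Ioc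
        (fun u hu => hqpt u (Set.Ioc_subset_Icc_self hu))
    have hzero : q =ᵐ[volume.restrict (Set.Ioc a c)] 0 :=
      (intervalIntegral.integral_eq_zero_iff_of_le_of_nonneg_ae hac.le hqae hqint).1 hQeq
    have hq0 : ∀ᵐ ψ ∂(volume : Measure ℝ), ψ ∈ Set.Ioc a c → q ψ = 0 :=
      (ae_restrict_iff' measurableSet_Ioc).1 hzero
    -- every point of (a,b) has value w c
    have key : ∀ x ∈ Set.Ioo a b, w x = w c := by
      intro x hx
      set m := min x (a + b - x) with hm
      have ham : a < m := lt_min hx.1 (by linarith [hx.2])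
      have hmc : m ≤ c := by
        rw [hc]
        rcases le_total x (a + b - x) with h | h
        · rw [hm, min_eq_left h]; linarith
        · rw [hm, min_eq_right h]; linarith
      -- find a good point ψ in (a, m)
      have hAc : volume {ψ : ℝ | ¬(ψ ∈ Set.Ioc a c → q ψ = 0)} = 0 := ae_iff.1 hq0
      have hne : (Set.Ioo a m ∩ {ψ : ℝ | ψ ∈ Set.Ioc a c → q ψ = 0}).Nonempty := by
        by_contra hcon
        rw [Set.not_nonempty_iff_eq_empty] at hcon
        have hsub : Set.Ioo a m ⊆ {ψ : ℝ | ¬(ψ ∈ Set.Ioc a c → q ψ = 0)} := by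
          intro ψ hψ
          intro hA
          exact Set.eq_empty_iff_forall_notMem.1 hcon ψ ⟨hψ, hA⟩
        have h0 : volume (Set.Ioo a m) = 0 :=
          le_antisymm (hAc ▸ measure_mono hsub) zero_le
        rw [Real.volume_Ioo] at h0
        have : m - a ≤ 0 := by
          by_contra hpos
          push_neg at hpos
          exact (ENNReal.ofReal_pos.2 hpos).ne' h0
        linarith
      obtain ⟨ψ, hψIoo, hψA⟩ := hne
      have hψIoc : ψ ∈ Set.Ioc a c := ⟨hψIoo.1, (hψIoo.2.trans_le hmc).le⟩
      have hqψ : q ψ = 0 := hψA hψIoc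
      have hψc : ψ < c := hψIoo.2.trans_le hmc
      have hsinpos : 0 < Real.sin (c - ψ) :=
        Real.sin_pos_of_pos_of_lt_pi (by linarith) (by linarith [hψIoo.1])
      have hweq : w (a + b - ψ) = w ψ := by
        rcases mul_eq_zero.1 hqψ with h | h
        · linarith [sub_eq_zero.1 h]
        · exact absurd h hsinpos.ne'
      -- memberships
      have hψm1 : ψ ∈ Set.Icc a b := ⟨hψIoo.1.le, by linarith⟩
      have hψm2 : a + b - ψ ∈ Set.Icc a b := by
        rw [hc] at hψc
        exact ⟨by linarith, by linarith [hψIoo.1]⟩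
      have hxm : x ∈ Set.Icc a b := ⟨hx.1.le, hx.2.le⟩
      have hcm : c ∈ Set.Icc a b := ⟨hac.le, hcb.le⟩
      have hψx : ψ ≤ x := le_of_lt (hψIoo.2.trans_le (min_le_left _ _))
      have hxr : x ≤ a + b - ψ := by
        have : ψ < a + b - x := hψIoo.2.trans_le (min_le_right _ _)
        linarith
      have hψcle : ψ ≤ c := hψc.le
      have hcr : c ≤ a + b - ψ := by rw [hc] at hψcle ⊢; linarith
      have hwx : w x = w ψ :=
        le_antisymm (hweq ▸ hmono hxm hψm2 hxr) (hmono hψm1 hxm hψx)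
      have hwc' : w c = w ψ :=
        le_antisymm (hweq ▸ hmono hcm hψm2 hcr) (hmono hψm1 hcm hψcle)
      rw [hwx, hwc']
    refine ⟨w c, ?_⟩
    have hnea : ({a}ᶜ : Set ℝ) ∈ ae (volume : Measure ℝ) :=
      compl_mem_ae_iff.2 (measure_singleton a)
    have hneb : ({b}ᶜ : Set ℝ) ∈ ae (volume : Measure ℝ) :=
      compl_mem_ae_iff.2 (measure_singleton b)
    rw [ae_restrict_iff' measurableSet_Icc]
    filter_upwards [hnea, hneb] with ψ ha' hb' hmem
    exact key ψ ⟨lt_of_le_of_ne hmem.1 (Ne.symm ha'), lt_of_le_of_ne hmem.2 hb'⟩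
  · -- a.e. constant implies integral zero
    rintro ⟨k, hk⟩
    have hIoc : ∀ᵐ ψ ∂(volume.restrict (Set.Ioc a b)), w ψ = k :=
      hk.filter_mono (ae_mono (Measure.restrict_mono Set.Ioc_subset_Icc_self le_rfl))
    have hcongr : (∫ ψ in a..b, w ψ * Real.sin (c - ψ)) =
        ∫ ψ in a..b, k * Real.sin (c - ψ) := by
      rw [intervalIntegral.integral_of_le hab.le, intervalIntegral.integral_of_le hab.le]
      apply integral_congr_ae
      filter_upwards [hIoc] with ψ h
      rw [h]
    rw [hcongr, intervalIntegral.integral_const_mul]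
    have hzero : (∫ ψ in a..b, Real.sin (c - ψ)) = 0 := by
      rw [intervalIntegral.integral_comp_sub_left Real.sin c, integral_sin]
      have h1 : c - b = -((b - a) / 2) := by rw [hc]; ring
      have h2 : c - a = (b - a) / 2 := by rw [hc]; ring
      rw [h1, h2, Real.cos_neg, sub_self]
    rw [hzero, mul_zero]
end

section
/- Let a ∈ ℂ with |a| < 1 and β ∈ ℝ, let M(z) = e^{iβ}·(z − a)/(1 − conj(a)·z), and let η : ℝ → ℝ be a continuous function with e^{iη(t)} = M(e^{it}) for all t ∈ ℝ. Then for every z in the open unit disk and all θ, θ′ ∈ ℝ with θ < θ′ ≤ θ + 2π: ∫_{η(θ)}^{η(θ′)} P(M(z), t) dt = ∫_{θ}^{θ′} P(z, t) dt. (Conformal invariance of the harmonic measure of a boundary arc under an automorphism of the disk.) -/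
namespace HMCIAux
open Complex

/-- Primitive of the Poisson kernel in the angular variable. -/
noncomputable def Gaux (z : ℂ) (t : ℝ) : ℝ :=
  (1 / (2 * Real.pi)) * (t + 2 * (Complex.log (1 - z * Complex.exp (-(t : ℂ) * Complex.I))).im)

lemma slit_aux {z w : ℂ} (hz : ‖z‖ < 1) (hw : ‖w‖ ≤ 1) :
    0 < (1 - z * w).re := by
  have h1 : (z * w).re ≤ ‖z * w‖ := Complex.re_le_norm _
  have h2 : ‖z * w‖ < 1 := by
    rw [norm_mul]
    nlinarith [norm_nonneg z, norm_nonneg w]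
  simp only [Complex.sub_re, Complex.one_re, Complex.mul_re]
  simp only [Complex.mul_re] at h1
  linarith

lemma slit_ne {z w : ℂ} (hz : ‖z‖ < 1) (hw : ‖w‖ ≤ 1) :
    1 - z * w ≠ 0 := by
  intro h
  have := slit_aux hz hw
  rw [h] at this
  simp at this

lemma conj_ne {x : ℂ} (h : x ≠ 0) : (starRingEnd ℂ) x ≠ 0 :=
  fun hc => h (by simpa using congrArg (starRingEnd ℂ) hc)

lemma habs_exp_neg (t : ℝ) : ‖Complex.exp (-(t : ℂ) * Complex.I)‖ = 1 := by
  rw [show -(t : ℂ) * Complex.I = ((-t : ℝ) : ℂ) * Complex.I by push_cast; ring,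
    Complex.norm_exp_ofReal_mul_I]

lemma exp_neg_conj (t : ℝ) :
    Complex.exp (-(t:ℂ) * Complex.I) = (starRingEnd ℂ) (Complex.exp ((t:ℂ) * Complex.I)) := by
  rw [← Complex.exp_conj]
  congr 1
  simp [map_mul, Complex.conj_I]

lemma key_im {z e : ℂ} (hz : ‖z‖ < 1) (he : ‖e‖ = 1) :
    1 + 2 * (((1 - z * (starRingEnd ℂ) e)⁻¹ * (z * Complex.I * (starRingEnd ℂ) e)).im)
      = (1 - ‖z‖ ^ 2) / ‖z - e‖ ^ 2 := by
  have hzne : z ≠ e := fun h => by rw [h, he] at hz; exact lt_irrefl 1 hz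
  have hne : z - e ≠ 0 := sub_ne_zero.mpr hzne
  have hns : Complex.normSq (z - e) ≠ 0 := by simpa [Complex.normSq_eq_zero] using hne
  have he2 : e.re ^ 2 + e.im ^ 2 = 1 := by
    have := Complex.sq_norm e
    rw [he] at this
    simpa [Complex.normSq_apply, sq] using this.symm
  rw [Complex.sq_norm, Complex.sq_norm, inv_mul_eq_div, Complex.div_im]
  have hns2 : Complex.normSq (1 - z * (starRingEnd ℂ) e) = Complex.normSq (z - e) := by
    simp only [Complex.normSq_apply, Complex.mul_re, Complex.mul_im, Complex.sub_re,
      Complex.sub_im, Complex.one_re, Complex.one_im, Complex.conj_re, Complex.conj_im]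
    linear_combination (z.re^2 + z.im^2 - 1) * he2
  rw [hns2, eq_div_iff hns]
  field_simp
  simp only [Complex.normSq_apply, Complex.mul_re, Complex.mul_im, Complex.sub_re,
    Complex.sub_im, Complex.one_re, Complex.one_im, Complex.conj_re, Complex.conj_im,
    Complex.I_re, Complex.I_im]
  ring_nf
  linear_combination (1 - 2*z.re^2 - 2*z.im^2) * he2

lemma hasDerivAt_Gaux {z : ℂ} (hz : ‖z‖ < 1) (t : ℝ) :
    HasDerivAt (Gaux z) (poisson z t) t := by
  have hE := habs_exp_neg t
  have hmem : (1 - z * Complex.exp (-(t:ℂ) * I)) ∈ Complex.slitPlane :=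
    Or.inl (slit_aux hz hE.le)
  have h1 : HasDerivAt (fun s : ℂ => -s * I) (-I) (t : ℂ) := by
    simpa using ((hasDerivAt_id (t : ℂ)).neg.mul_const I)
  have h2 := h1.cexp
  have h3 : HasDerivAt (fun s : ℂ => 1 - z * Complex.exp (-s * I))
      (-(z * (Complex.exp (-(t:ℂ) * I) * -I))) (t : ℂ) := by
    simpa using ((h2.const_mul z).const_sub 1)
  have h4 := (Complex.hasDerivAt_log hmem).comp (t : ℂ) h3
  have h5 := h4.comp_ofReal
  have h6 := Complex.imCLM.hasFDerivAt.comp_hasDerivAt t h5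
  have h7 := ((hasDerivAt_id t).add ((h6.const_mul (2:ℝ)))).const_mul (1 / (2 * Real.pi))
  refine h7.congr_deriv ?_
  rw [exp_neg_conj] at *
  have he : ‖Complex.exp ((t:ℂ) * I)‖ = 1 := Complex.norm_exp_ofReal_mul_I t
  have hk := key_im hz he
  simp only [Complex.imCLM_apply, poisson, mul_div_assoc]
  rw [show -(z * ((starRingEnd ℂ) (Complex.exp ((t:ℂ) * I)) * -I))
      = z * I * (starRingEnd ℂ) (Complex.exp ((t:ℂ) * I)) from by ring, ← hk]

lemma cont_poisson {z : ℂ} (hz : ‖z‖ < 1) : Continuous (poisson z) := by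
  have hden : Continuous fun t : ℝ => ‖z - Complex.exp ((t:ℂ) * I)‖ ^ 2 := by
    apply Continuous.pow
    exact continuous_norm.comp (continuous_const.sub
      (Complex.continuous_exp.comp (Complex.continuous_ofReal.mul continuous_const)))
  apply Continuous.div continuous_const hden
  intro t
  have he : ‖Complex.exp ((t:ℂ) * I)‖ = 1 := Complex.norm_exp_ofReal_mul_I t
  have hne0 : z ≠ Complex.exp ((t:ℂ) * I) := fun h => by
    rw [h, he] at hz; exact lt_irrefl 1 hz
  have hne : z - Complex.exp ((t:ℂ) * I) ≠ 0 := sub_ne_zero.mpr hne0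
  have := norm_pos_iff.mpr hne
  positivity

lemma mobius_lt_one {a z : ℂ} (ha : ‖a‖ < 1) (hz : ‖z‖ < 1) (β : ℝ) :
    ‖Complex.exp ((β:ℂ) * Complex.I) * (z - a) / (1 - (starRingEnd ℂ) a * z)‖ < 1 := by
  have hd : 1 - (starRingEnd ℂ) a * z ≠ 0 := slit_ne (by rwa [Complex.norm_conj]) hz.le
  have hdp : 0 < ‖1 - (starRingEnd ℂ) a * z‖ := norm_pos_iff.mpr hd
  rw [norm_div, norm_mul, Complex.norm_exp_ofReal_mul_I, one_mul, div_lt_one hdp]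
  have hns : Complex.normSq (z - a) < Complex.normSq (1 - (starRingEnd ℂ) a * z) := by
    have key : Complex.normSq (1 - (starRingEnd ℂ) a * z) - Complex.normSq (z - a)
        = (1 - Complex.normSq a) * (1 - Complex.normSq z) := by
      simp only [Complex.normSq_apply, Complex.mul_re, Complex.mul_im, Complex.sub_re,
        Complex.sub_im, Complex.one_re, Complex.one_im, Complex.conj_re, Complex.conj_im]
      ring
    have h1 : Complex.normSq a < 1 := by rw [← Complex.sq_norm]; nlinarith [norm_nonneg a]
    have h2 : Complex.normSq z < 1 := by rw [← Complex.sq_norm]; nlinarith [norm_nonneg z]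
    nlinarith
  rw [Complex.norm_def, Complex.norm_def]
  exact Real.sqrt_lt_sqrt (Complex.normSq_nonneg _) hns

lemma int_valued_const {f : ℝ → ℝ} (hf : Continuous f) (h : ∀ t, ∃ n : ℤ, f t = n) (t : ℝ) :
    f t = f 0 := by
  by_contra hne
  obtain ⟨n, hn⟩ := h t
  obtain ⟨m, hm⟩ := h 0
  have hnm : n ≠ m := fun h' => hne (by rw [hn, hm, h'])
  have half : ∀ s : ℝ, ((m : ℝ) + 1/2 ≠ f s) ∧ ((m : ℝ) - 1/2 ≠ f s) := by
    intro s
    obtain ⟨k, hk⟩ := h s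
    constructor <;> intro hcon <;> rw [hk] at hcon
    · have h2 : (2 * m + 1 : ℝ) = (2 * k : ℝ) := by push_cast; linarith
      have : 2 * m + 1 = 2 * k := by exact_mod_cast h2
      omega
    · have h2 : (2 * m - 1 : ℝ) = (2 * k : ℝ) := by push_cast; linarith
      have : 2 * m - 1 = 2 * k := by exact_mod_cast h2
      omega
  rcases lt_or_gt_of_ne hnm with hlt | hgt
  · have hmem : (m : ℝ) - 1/2 ∈ Set.Icc (f t) (f 0) := by
      constructor
      · rw [hn]
        have h1 : n + 1 ≤ m := Int.lt_iff_add_one_le.mp hlt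
        have : (n : ℝ) + 1 ≤ (m : ℝ) := by exact_mod_cast h1
        linarith
      · rw [hm]; linarith
    obtain ⟨s, hs⟩ := intermediate_value_univ t 0 hf hmem
    exact (half s).2 hs.symm
  · have hmem : (m : ℝ) + 1/2 ∈ Set.Icc (f 0) (f t) := by
      constructor
      · rw [hm]; linarith
      · rw [hn]
        have h1 : m + 1 ≤ n := Int.lt_iff_add_one_le.mp hgt
        have : (m : ℝ) + 1 ≤ (n : ℝ) := by exact_mod_cast h1
        linarith
    obtain ⟨s, hs⟩ := intermediate_value_univ 0 t hf hmem
    exact (half s).1 hs.symm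

lemma sq_exp_arg {u : ℂ} (hu : u ≠ 0) :
    Complex.exp (((Complex.log u).im : ℂ) * Complex.I) ^ 2 = u / (starRingEnd ℂ) u := by
  have habs : (‖u‖ : ℂ) ≠ 0 := by
    simpa using norm_ne_zero_iff.mpr hu
  have h1 : Complex.exp (((Complex.log u).im : ℂ) * Complex.I) = u / (‖u‖ : ℂ) := by
    rw [Complex.log_im, eq_div_iff habs, mul_comm]
    exact Complex.norm_mul_exp_arg_mul_I u
  have h2 : ((‖u‖ : ℂ)) ^ 2 = u * (starRingEnd ℂ) u := by
    rw [Complex.mul_conj]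
    norm_cast
    exact Complex.sq_norm u
  rw [h1, div_pow, h2]
  have hcu : (starRingEnd ℂ) u ≠ 0 := conj_ne hu
  field_simp

set_option maxHeartbeats 1000000 in
lemma exp_psi_const
    (a : ℂ) (ha : ‖a‖ < 1) (β : ℝ)
    (M : ℂ → ℂ)
    (hM : ∀ z : ℂ, M z = Complex.exp (β * Complex.I) * (z - a) / (1 - (starRingEnd ℂ) a * z))
    (η : ℝ → ℝ)
    (hlift : ∀ t : ℝ, Complex.exp ((η t : ℂ) * Complex.I) = M (Complex.exp (t * Complex.I)))
    (z : ℂ) (hz : ‖z‖ < 1) (hw : ‖M z‖ < 1) (t : ℝ) :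
    Complex.exp (((((η t + 2 * (Complex.log (1 - M z * Complex.exp (-(η t : ℂ) * Complex.I))).im)
        - (t + 2 * (Complex.log (1 - z * Complex.exp (-(t : ℂ) * Complex.I))).im) : ℝ)) : ℂ)
        * Complex.I)
      = Complex.exp ((β:ℂ) * Complex.I) * (starRingEnd ℂ) (1 - (starRingEnd ℂ) a * z)
          / (1 - (starRingEnd ℂ) a * z) := by
  have hca : ‖(starRingEnd ℂ) a‖ < 1 := by rwa [Complex.norm_conj]
  set eb := Complex.exp ((β:ℂ) * I) with hebdef
  have hebne : eb ≠ 0 := Complex.exp_ne_zero _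
  have hebabs : ‖eb‖ = 1 := Complex.norm_exp_ofReal_mul_I β
  have hbb : eb * (starRingEnd ℂ) eb = 1 := by
    rw [Complex.mul_conj]
    norm_cast
    rw [← Complex.sq_norm, hebabs]
    norm_num
  set E := Complex.exp ((t:ℂ) * I) with hEdef
  have hEabs : ‖E‖ = 1 := Complex.norm_exp_ofReal_mul_I t
  have hEne : E ≠ 0 := Complex.exp_ne_zero _
  have hEE : E * (starRingEnd ℂ) E = 1 := by
    rw [Complex.mul_conj]
    norm_cast
    rw [← Complex.sq_norm, hEabs]
    norm_num
  have hME : Complex.exp ((η t : ℂ) * I) = M E := hlift t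
  have hMEabs : ‖M E‖ = 1 := by
    rw [← hME]; exact Complex.norm_exp_ofReal_mul_I (η t)
  have hconjME : Complex.exp (-(η t : ℂ) * I) = (starRingEnd ℂ) (M E) := by
    rw [exp_neg_conj, hME]
  have hconjE : Complex.exp (-(t:ℂ) * I) = (starRingEnd ℂ) E := exp_neg_conj t
  set d := 1 - (starRingEnd ℂ) a * z with hd
  set wd := 1 - a * (starRingEnd ℂ) E with hwd
  set v := 1 - z * (starRingEnd ℂ) E with hv
  set K := 1 - a * (starRingEnd ℂ) a with hK
  set u := 1 - M z * (starRingEnd ℂ) (M E) with hu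
  have hdne : d ≠ 0 := slit_ne hca hz.le
  have hwdne : wd ≠ 0 := slit_ne ha (by rw [Complex.norm_conj, hEabs])
  have hvne : v ≠ 0 := slit_ne hz (by rw [Complex.norm_conj, hEabs])
  have hKne : K ≠ 0 := slit_ne ha (by rw [Complex.norm_conj]; exact ha.le)
  have hune : u ≠ 0 := slit_ne hw (by rw [Complex.norm_conj, hMEabs])
  have hcwdne : (starRingEnd ℂ) wd ≠ 0 := conj_ne hwdne
  have hcdne : (starRingEnd ℂ) d ≠ 0 := conj_ne hdne
  have hcvne : (starRingEnd ℂ) v ≠ 0 := conj_ne hvne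
  have hcune : (starRingEnd ℂ) u ≠ 0 := conj_ne hune
  have hcwd : (starRingEnd ℂ) wd = 1 - (starRingEnd ℂ) a * E := by
    rw [hwd]; simp [map_mul, map_sub]
  have hMEeq : M E = eb * (E - a) / (starRingEnd ℂ) wd := by
    rw [hM E, hcwd]
  have hconjMEeq : (starRingEnd ℂ) (M E)
      = (starRingEnd ℂ) eb * ((starRingEnd ℂ) E - (starRingEnd ℂ) a) / wd := by
    rw [hM E]
    simp only [map_div₀, map_mul, map_sub, map_one, Complex.conj_conj]
    rw [hwd]
  have F4 : u * (d * wd) = K * v := by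
    rw [hu, hconjMEeq, hM z, ← hd]
    field_simp
    linear_combination ((starRingEnd ℂ) a * z + a * (starRingEnd ℂ) E - (starRingEnd ℂ) a * a
      - z * (starRingEnd ℂ) E) * hbb
  have F5 : (starRingEnd ℂ) u * ((starRingEnd ℂ) d * (starRingEnd ℂ) wd)
      = K * (starRingEnd ℂ) v := by
    have h := congrArg (starRingEnd ℂ) F4
    simp only [map_mul, map_sub, map_one, Complex.conj_conj, hK] at h
    rw [hK]
    linear_combination h
  have hsplit : ((((η t + 2 * (Complex.log (1 - M z * Complex.exp (-(η t : ℂ) * I))).im)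
        - (t + 2 * (Complex.log (1 - z * Complex.exp (-(t : ℂ) * I))).im) : ℝ)) : ℂ) * I
      = ((η t : ℂ) * I + (((Complex.log u).im : ℂ) * I + ((Complex.log u).im : ℂ) * I))
        - ((t:ℂ) * I + (((Complex.log v).im : ℂ) * I + ((Complex.log v).im : ℂ) * I)) := by
    rw [hconjME, hconjE, ← hu, ← hv]
    push_cast
    ring
  rw [hsplit, Complex.exp_sub, Complex.exp_add, Complex.exp_add, Complex.exp_add,
    Complex.exp_add, ← sq, ← sq, sq_exp_arg hune, sq_exp_arg hvne, hME]
  have hu2 : u = K * v / (d * wd) := by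
    rw [eq_div_iff (mul_ne_zero hdne hwdne)]; exact F4
  have hcu2 : (starRingEnd ℂ) u
      = K * (starRingEnd ℂ) v / ((starRingEnd ℂ) d * (starRingEnd ℂ) wd) := by
    rw [eq_div_iff (mul_ne_zero hcdne hcwdne)]; exact F5
  have stepA : u / (starRingEnd ℂ) u
      = ((starRingEnd ℂ) d * (starRingEnd ℂ) wd) / (d * wd) * (v / (starRingEnd ℂ) v) := by
    rw [hcu2]
    rw [hu2]
    field_simp
  have stepB : M E * (starRingEnd ℂ) wd = eb * wd * E := by
    rw [hMEeq]
    field_simp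
    linear_combination a * hEE
  have hMEne : M E ≠ 0 := fun h => by simp [h] at hMEabs
  rw [stepA, ← hEdef]
  have stepB' := stepB
  simp only [hwd] at stepB'
  field_simp
  linear_combination stepB

end HMCIAux

open HMCIAux Complex in
/-- **Conformal invariance of harmonic measure under disk automorphisms.** -/
theorem harmonic_measure_conformal_invariance
    (a : ℂ) (ha : ‖a‖ < 1) (β : ℝ)
    (M : ℂ → ℂ)
    (hM : ∀ z : ℂ, M z = Complex.exp (β * Complex.I) * (z - a) / (1 - (starRingEnd ℂ) a * z))
    (η : ℝ → ℝ) (hη : Continuous η)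
    (hlift : ∀ t : ℝ, Complex.exp ((η t : ℂ) * Complex.I) = M (Complex.exp (t * Complex.I))) :
    ∀ z : ℂ, ‖z‖ < 1 → ∀ θ θ' : ℝ, θ < θ' → θ' ≤ θ + 2 * Real.pi →
      ∫ t in (η θ)..(η θ'), poisson (M z) t = ∫ t in θ..θ', poisson z t := by
  intro z hz θ θ' _ _
  have hw : ‖M z‖ < 1 := by rw [hM]; exact mobius_lt_one ha hz β
  have ftc : ∀ (ζ : ℂ), ‖ζ‖ < 1 → ∀ c c' : ℝ,
      ∫ t in c..c', poisson ζ t = Gaux ζ c' - Gaux ζ c := by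
    intro ζ hζ c c'
    exact intervalIntegral.integral_eq_sub_of_hasDerivAt
      (fun t _ => hasDerivAt_Gaux hζ t) ((cont_poisson hζ).intervalIntegrable c c')
  rw [ftc z hz θ θ', ftc (M z) hw (η θ) (η θ')]
  set ψ : ℝ → ℝ := fun t =>
    (η t + 2 * (Complex.log (1 - M z * Complex.exp (-(η t : ℂ) * I))).im)
      - (t + 2 * (Complex.log (1 - z * Complex.exp (-(t : ℂ) * I))).im) with hψdef
  have hGψ : ∀ t : ℝ, Gaux (M z) (η t) - Gaux z t = (1 / (2 * Real.pi)) * ψ t := by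
    intro t
    simp only [Gaux, hψdef]
    ring
  have hcont : Continuous ψ := by
    have c1 : Continuous fun t : ℝ =>
        (Complex.log (1 - M z * Complex.exp (-(η t : ℂ) * I))).im := by
      apply Complex.continuous_im.comp
      rw [continuous_iff_continuousAt]
      intro t
      have hc : Continuous fun t : ℝ => 1 - M z * Complex.exp (-(η t : ℂ) * I) := by
        apply continuous_const.sub
        exact continuous_const.mul (Complex.continuous_exp.comp
          ((Complex.continuous_ofReal.comp hη).neg.mul continuous_const))
      exact hc.continuousAt.clog (Or.inl (slit_aux hw (habs_exp_neg (η t)).le))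
    have c2 : Continuous fun t : ℝ =>
        (Complex.log (1 - z * Complex.exp (-(t : ℂ) * I))).im := by
      apply Complex.continuous_im.comp
      rw [continuous_iff_continuousAt]
      intro t
      have hc : Continuous fun t : ℝ => 1 - z * Complex.exp (-(t : ℂ) * I) := by
        apply continuous_const.sub
        exact continuous_const.mul (Complex.continuous_exp.comp
          (Complex.continuous_ofReal.neg.mul continuous_const))
      exact hc.continuousAt.clog (Or.inl (slit_aux hz (habs_exp_neg t).le))
    exact ((hη.add (continuous_const.mul c1)).sub (continuous_id.add (continuous_const.mul c2)))
  have hexp : ∀ t : ℝ, Complex.exp ((ψ t : ℂ) * I)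
      = Complex.exp ((β:ℂ) * I) * (starRingEnd ℂ) (1 - (starRingEnd ℂ) a * z)
          / (1 - (starRingEnd ℂ) a * z) := by
    intro t
    rw [hψdef]
    exact exp_psi_const a ha β M hM η hlift z hz hw t
  have hCne : Complex.exp ((β:ℂ) * I) * (starRingEnd ℂ) (1 - (starRingEnd ℂ) a * z)
      / (1 - (starRingEnd ℂ) a * z) ≠ 0 := by
    have hdne : 1 - (starRingEnd ℂ) a * z ≠ 0 :=
      slit_ne (by rwa [Complex.norm_conj]) hz.le
    exact div_ne_zero (mul_ne_zero (Complex.exp_ne_zero _) (conj_ne hdne)) hdne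
  have hπ : (2 * Real.pi) ≠ 0 := by positivity
  have hint : ∀ t : ℝ, ∃ n : ℤ, (ψ t - ψ 0) / (2 * Real.pi) = n := by
    intro t
    have h1 : Complex.exp ((ψ t : ℂ) * I - (ψ 0 : ℂ) * I) = 1 := by
      rw [Complex.exp_sub, hexp t, hexp 0, div_self hCne]
    obtain ⟨n, hn⟩ := Complex.exp_eq_one_iff.mp h1
    have h3 : ((ψ t - ψ 0 : ℝ) : ℂ) * I = (((n : ℝ) * (2 * Real.pi) : ℝ) : ℂ) * I := by
      push_cast
      push_cast at hn
      linear_combination hn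
    have h2 : ((ψ t - ψ 0 : ℝ) : ℂ) = (((n : ℝ) * (2 * Real.pi) : ℝ) : ℂ) :=
      mul_right_cancel₀ Complex.I_ne_zero h3
    have h4 : ψ t - ψ 0 = (n : ℝ) * (2 * Real.pi) := by exact_mod_cast h2
    exact ⟨n, by rw [h4]; field_simp⟩
  have hconst : ∀ t : ℝ, ψ t = ψ 0 := by
    intro t
    have h0 : (ψ t - ψ 0) / (2 * Real.pi) = (ψ 0 - ψ 0) / (2 * Real.pi) :=
      int_valued_const (f := fun t => (ψ t - ψ 0) / (2 * Real.pi)) ((hcont.sub continuous_const).div_const _) hint t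
    rw [sub_self, zero_div] at h0
    rcases div_eq_zero_iff.mp h0 with h | h
    · linarith
    · exact absurd h hπ
  have e1 := hGψ θ
  have e2 := hGψ θ'
  rw [hconst θ] at e1
  rw [hconst θ'] at e2
  linarith [e1, e2]
end
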